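/- Let k be an integer with 0 ≤ k ≤ m-1, define a = 2γ^(3k)/3, b = 1/3, c = -γ^(3k)/3 in F_q, and let g(x) = a·x^(3m-1) + b·x^(2m+1) + c·x^(2m-1) + b·x^(m+1) + c·x^(m-1) + b·x. Then for every integer i with 0 ≤ i ≤ m-1 one has g(γ^(3(k-i)-1)) = γ^(3i+1), where the exponent 3(k-i)-1 is an integer exponent (possibly negative) and γ raised to it is taken in the group F_q^*. -/

import Mathlib

theorem stmt15 (q m : ℕ) (F : Type*) [Field F] [Fintype F]
    (hq : Fintype.card F = q) (hodd : Odd q) (hq3 : q % 3 = 1)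
    (hm : m = (q - 1) / 3)
    (γ : Fˣ) (hγ : ∀ x : Fˣ, x ∈ Subgroup.zpowers γ)
    (k : ℕ) (hk : k ≤ m - 1)
    (a b c : F)
    (ha : a = 2 * (γ : F)^(3*k) / 3)
    (hb : b = 1 / 3)
    (hc : c = -(γ : F)^(3*k) / 3)
    (g : F → F)
    (hg : ∀ x : F, g x = a * x^(3*m-1) + b * x^(2*m+1) + c * x^(2*m-1) + b * x^(m+1) + c * x^(m-1) + b * x) :
    ∀ i : ℕ, i ≤ m - 1 → g (((γ ^ (3 * ((k : ℤ) - (i : ℤ)) - 1) : Fˣ) : F)) = (γ : F)^(3*i+1) := by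
  intro i hi
  classical
  have hq2 : 2 ≤ q := by rw [← hq]; exact Fintype.one_lt_card
  have hq2' : q % 2 = 1 := Nat.odd_iff.mp hodd
  have hq7 : 7 ≤ q := by omega
  have hm1 : 1 ≤ m := by omega
  have h3m : 3 * m = q - 1 := by omega
  have hcardU : Fintype.card Fˣ = q - 1 := by rw [Fintype.card_units, hq]
  have hord : orderOf γ = q - 1 := by
    rw [orderOf_eq_card_of_forall_mem_zpowers hγ, Nat.card_eq_fintype_card, hcardU]
  have hγ1 : γ ^ (3 * m) = 1 := by
    rw [h3m, ← hord]; exact pow_orderOf_eq_one γ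
  set t : F := (γ : F) with htdef
  have ht : t ≠ 0 := Units.ne_zero γ
  have htn1 : t ^ (3 * m) = 1 := by
    have := congrArg (Units.val) hγ1
    simpa using this
  have ht1 : t ^ (3 * (m : ℤ)) = 1 := by
    rw [show 3 * (m : ℤ) = ((3 * m : ℕ) : ℤ) by push_cast; ring, zpow_natCast, htn1]
  have hred : ∀ z j : ℤ, t ^ (z + 3 * (m : ℤ) * j) = t ^ z := by
    intro z j
    rw [zpow_add₀ ht, zpow_mul, ht1, one_zpow, mul_one]
  set e : ℤ := 3 * ((k : ℤ) - (i : ℤ)) - 1 with he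
  have hx : ((γ ^ e : Fˣ) : F) = t ^ e := Units.val_zpow_eq_zpow_val γ e
  -- ω = t^m and its quadratic relation
  have hmne : γ ^ m ≠ 1 := by
    intro h
    have hd := orderOf_dvd_of_pow_eq_one h
    rw [hord] at hd
    have := Nat.le_of_dvd (by omega) hd
    omega
  have hωne : t ^ (m : ℤ) ≠ 1 := by
    intro h
    apply hmne
    apply Units.ext
    have : ((γ ^ m : Fˣ) : F) = t ^ (m : ℤ) := by
      rw [zpow_natCast]; simp; rfl
    rw [this, h]; simp
  have hω3 : t ^ (m : ℤ) * t ^ (m : ℤ) * t ^ (m : ℤ) = 1 := by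
    rw [← zpow_add₀ ht, ← zpow_add₀ ht, show (m : ℤ) + (m : ℤ) + (m : ℤ) = 3 * (m : ℤ) by ring, ht1]
  have hquad : t ^ (m : ℤ) * t ^ (m : ℤ) + t ^ (m : ℤ) + 1 = 0 := by
    have h0 : (t ^ (m : ℤ) - 1) * (t ^ (m : ℤ) * t ^ (m : ℤ) + t ^ (m : ℤ) + 1) = 0 := by
      linear_combination hω3
    rcases mul_eq_zero.mp h0 with h | h
    · exact absurd (sub_eq_zero.mp h) hωne
    · exact h
  have h3 : (3 : F) ≠ 0 := by
    intro h
    apply hωne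
    have hsq : (t ^ (m : ℤ) - 1) ^ 2 = 0 := by linear_combination hquad - t ^ (m : ℤ) * h
    have h2 := pow_eq_zero_iff (n := 2) (by norm_num) |>.mp hsq
    exact sub_eq_zero.mp h2
  -- cast identities for the natural exponents
  have e1 : ((3 * m - 1 : ℕ) : ℤ) = 3 * (m : ℤ) - 1 := by omega
  have e2 : ((2 * m + 1 : ℕ) : ℤ) = 2 * (m : ℤ) + 1 := by push_cast; ring
  have e3 : ((2 * m - 1 : ℕ) : ℤ) = 2 * (m : ℤ) - 1 := by omega
  have e4 : ((m + 1 : ℕ) : ℤ) = (m : ℤ) + 1 := by push_cast; ring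
  have e5 : ((m - 1 : ℕ) : ℤ) = (m : ℤ) - 1 := by omega
  have hp : ∀ n : ℕ, (t ^ e) ^ n = t ^ (e * (n : ℤ)) := by
    intro n; rw [← zpow_natCast (t ^ e) n, ← zpow_mul]
  -- reduce each power
  have g1 : t ^ (e * (3 * (m : ℤ) - 1)) = t ^ (-e) := by
    rw [show e * (3 * (m : ℤ) - 1) = -e + 3 * (m : ℤ) * e by ring, hred]
  have g2 : t ^ (e * (2 * (m : ℤ) + 1)) = t ^ (m : ℤ) * t ^ e := by
    rw [show e * (2 * (m : ℤ) + 1) = ((m : ℤ) + e) + 3 * (m : ℤ) * (2 * ((k : ℤ) - (i : ℤ)) - 1) by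
      rw [he]; ring, hred, zpow_add₀ ht]
  have g3 : t ^ (e * (2 * (m : ℤ) - 1)) = t ^ (m : ℤ) * t ^ (-e) := by
    rw [show e * (2 * (m : ℤ) - 1) = ((m : ℤ) + -e) + 3 * (m : ℤ) * (2 * ((k : ℤ) - (i : ℤ)) - 1) by
      rw [he]; ring, hred, zpow_add₀ ht]
  have g4 : t ^ (e * ((m : ℤ) + 1)) = t ^ (m : ℤ) * t ^ (m : ℤ) * t ^ e := by
    rw [show e * ((m : ℤ) + 1) = ((m : ℤ) + ((m : ℤ) + e)) + 3 * (m : ℤ) * (((k : ℤ) - (i : ℤ)) - 1) by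
      rw [he]; ring, hred, zpow_add₀ ht, zpow_add₀ ht, mul_assoc]
  have g5 : t ^ (e * ((m : ℤ) - 1)) = t ^ (m : ℤ) * t ^ (m : ℤ) * t ^ (-e) := by
    rw [show e * ((m : ℤ) - 1) = ((m : ℤ) + ((m : ℤ) + -e)) + 3 * (m : ℤ) * (((k : ℤ) - (i : ℤ)) - 1) by
      rw [he]; ring, hred, zpow_add₀ ht, zpow_add₀ ht, mul_assoc]
  have grhs : t ^ (3 * i + 1) = t ^ (3 * k) * t ^ (-e) := by
    rw [← zpow_natCast t (3 * i + 1), ← zpow_natCast t (3 * k), ← zpow_add₀ ht]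
    congr 1
    rw [he]; push_cast; ring
  rw [hg, hx]
  simp only [hp, e1, e2, e3, e4, e5]
  rw [g1, g2, g3, g4, g5, grhs]
  have ha3 : 3 * a = 2 * t ^ (3 * k) := by rw [ha]; field_simp
  have hb3 : 3 * b = 1 := by rw [hb]; field_simp
  have hc3 : 3 * c = -t ^ (3 * k) := by rw [hc]; field_simp
  apply mul_left_cancel₀ h3
  linear_combination t ^ (-e) * ha3 +
    (t ^ (m : ℤ) * t ^ e + t ^ (m : ℤ) * t ^ (m : ℤ) * t ^ e + t ^ e) * hb3 +
    (t ^ (m : ℤ) * t ^ (-e) + t ^ (m : ℤ) * t ^ (m : ℤ) * t ^ (-e)) * hc3 +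
    (t ^ e - t ^ (3 * k) * t ^ (-e)) * hquad
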